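/- arXiv:1506.03050 — 4 statements merged into one kernel-verified Lean document; each statement's English description precedes it below -/
import Mathlib

section
/- For each fixed even integer $e > 0$, the coefficients $w_g$ of $\prod_{r \ge 1}(1+q^r)^{-e} \cdot \prod_{s \ge 1}(1-q^{2s})^{-(24-e)/2}$ satisfy $(-1)^g w_g > 0$ for all $g \ge 1$; i.e., $w_g$ is negative for odd $g$ and positive for even $g$. -/
open PowerSeries Finset

/-- Integer power of a power series over `ℚ`, using the power-series inverse
for negative exponents. -/
noncomputable def zp (f : PowerSeries ℚ) (n : ℤ) : PowerSeries ℚ :=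
  if 0 ≤ n then f ^ n.toNat else f⁻¹ ^ (-n).toNat

/-- The coefficient `w_g` of `∏_{r ≥ 1} (1+q^r)^{-e} · ∏_{s ≥ 1} (1-q^{2s})^{-(24-e)/2}`.
Since each factor with index `> g` is `1 + O(q^{g+1})`, the coefficient of `q^g`
equals that of the product truncated at index `g`. -/
noncomputable def W (e : ℤ) (g : ℕ) : ℚ :=
  PowerSeries.coeff g
    ((∏ r ∈ Icc 1 g, zp (1 + PowerSeries.X ^ r) (-e)) *
     (∏ s ∈ Icc 1 g, zp (1 - PowerSeries.X ^ (2 * s)) (-((24 - e) / 2))))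

/-- The coefficient `c_g` of the Yau–Zaslow series `∏_{s ≥ 1} (1-q^s)^{-24}`. -/
noncomputable def C (g : ℕ) : ℚ :=
  PowerSeries.coeff g (∏ s ∈ Icc 1 g, ((1 - PowerSeries.X ^ s)⁻¹) ^ 24)

namespace Stmt3Aux

/-- nonnegative coefficients -/
def NN (f : PowerSeries ℚ) : Prop := ∀ n, 0 ≤ PowerSeries.coeff n f

lemma NN_mul {f g : PowerSeries ℚ} (hf : NN f) (hg : NN g) : NN (f * g) := by
  intro n
  rw [coeff_mul]
  exact Finset.sum_nonneg fun p _ => mul_nonneg (hf _) (hg _)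

lemma NN_one : NN 1 := by
  intro n; rw [coeff_one]; split <;> norm_num

lemma NN_pow {f : PowerSeries ℚ} (hf : NN f) (n : ℕ) : NN (f ^ n) := by
  induction n with
  | zero => simpa using NN_one
  | succ k ih => rw [pow_succ]; exact NN_mul ih hf

lemma NN_prod {s : Finset ℕ} {f : ℕ → PowerSeries ℚ} (h : ∀ i ∈ s, NN (f i)) :
    NN (∏ i ∈ s, f i) :=
  Finset.prod_induction f NN (fun _ _ ha hb => NN_mul ha hb) NN_one h

lemma cc_one_sub (t : ℕ) (ht : 1 ≤ t) :
    constantCoeff (R := ℚ) (1 - X ^ t) = 1 := by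
  have h : t ≠ 0 := by omega
  simp [map_sub, map_pow, constantCoeff_X, zero_pow h]

lemma cc_one_add (t : ℕ) (ht : 1 ≤ t) :
    constantCoeff (R := ℚ) (1 + X ^ t) = 1 := by
  have h : t ≠ 0 := by omega
  simp [map_add, map_pow, constantCoeff_X, zero_pow h]

lemma inv_one_sub_pow (t : ℕ) (ht : 1 ≤ t) :
    (1 - X ^ t : PowerSeries ℚ)⁻¹ =
      PowerSeries.mk (fun n => if t ∣ n then 1 else 0) := by
  symm
  rw [PowerSeries.eq_inv_iff_mul_eq_one (by rw [cc_one_sub t ht]; norm_num)]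
  ext n
  rw [mul_sub, mul_one, map_sub, coeff_mul_X_pow', coeff_mk, coeff_one]
  rcases Nat.eq_zero_or_pos n with rfl | hn
  · have h0 : ¬ t ≤ 0 := by omega
    simp [h0]
  · have hne : ¬ n = 0 := by omega
    by_cases hd : t ∣ n
    · have hle : t ≤ n := Nat.le_of_dvd hn hd
      have hd2 : t ∣ n - t := Nat.dvd_sub hd dvd_rfl
      simp [hd, hle, hd2, coeff_mk, hne]
    · have hd2 : ¬ (t ≤ n ∧ t ∣ n - t) := by
        rintro ⟨hle, hdd⟩
        exact hd (by simpa [Nat.sub_add_cancel hle] using Nat.dvd_add hdd (dvd_refl t))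
      by_cases hle : t ≤ n
      · have : ¬ t ∣ n - t := fun h => hd2 ⟨hle, h⟩
        simp [hd, hle, this, coeff_mk, hne]
      · simp [hd, hle, hne]

lemma NN_inv (t : ℕ) (ht : 1 ≤ t) : NN ((1 - X ^ t : PowerSeries ℚ)⁻¹) := by
  intro n
  rw [inv_one_sub_pow t ht, coeff_mk]
  split <;> norm_num

lemma NN_oneAdd (r : ℕ) : NN (1 + X ^ r : PowerSeries ℚ) := by
  intro n
  rw [map_add, coeff_one, coeff_X_pow]
  split_ifs <;> norm_num

lemma coeff_pos_mul {f g : PowerSeries ℚ} (hf : NN f) (hg : NN g) {i j : ℕ}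
    (hi : 0 < PowerSeries.coeff i f) (hj : 0 < PowerSeries.coeff j g) :
    0 < PowerSeries.coeff (i + j) (f * g) := by
  rw [coeff_mul]
  have hmem : (i, j) ∈ Finset.HasAntidiagonal.antidiagonal (i + j) := by simp
  exact lt_of_lt_of_le (mul_pos hi hj)
    (Finset.single_le_sum (f := fun p : ℕ × ℕ => PowerSeries.coeff p.1 f * PowerSeries.coeff p.2 g)
      (fun p _ => mul_nonneg (hf _) (hg _)) hmem)

lemma rescale_inv {f : PowerSeries ℚ} (a : ℚ) (hf : constantCoeff f ≠ 0) :
    rescale a f⁻¹ = (rescale a f)⁻¹ := by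
  have h2 : constantCoeff (rescale a f) ≠ 0 := by
    rwa [← coeff_zero_eq_constantCoeff_apply, coeff_rescale, pow_zero, one_mul,
      coeff_zero_eq_constantCoeff_apply]
  rw [PowerSeries.eq_inv_iff_mul_eq_one h2, ← map_mul]
  have : f⁻¹ * f = 1 := by rw [mul_comm]; exact PowerSeries.mul_inv_cancel f hf
  rw [this, map_one]

lemma key (r : ℕ) (hr : 1 ≤ r) :
    (1 + X ^ r : PowerSeries ℚ)⁻¹ = (1 - X ^ r) * (1 - X ^ (2 * r))⁻¹ := by
  symm
  rw [PowerSeries.eq_inv_iff_mul_eq_one (by rw [cc_one_add r hr]; norm_num)]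
  have h1 : (1 - X ^ r : PowerSeries ℚ) * (1 + X ^ r) = 1 - X ^ (2 * r) := by
    rw [two_mul, pow_add]; ring
  calc (1 - X ^ r : PowerSeries ℚ) * (1 - X ^ (2 * r))⁻¹ * (1 + X ^ r)
      = (1 - X ^ r) * (1 + X ^ r) * (1 - X ^ (2 * r))⁻¹ := by ring
    _ = (1 - X ^ (2 * r)) * (1 - X ^ (2 * r))⁻¹ := by rw [h1]
    _ = 1 := PowerSeries.mul_inv_cancel _ (by rw [cc_one_sub _ (by omega)]; norm_num)

lemma coeff_onePlusX_pow_pos (E : ℕ) (hE : 1 ≤ E) {i : ℕ} (hi : i ≤ 1) :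
    0 < PowerSeries.coeff i ((1 + X : PowerSeries ℚ) ^ E) := by
  obtain ⟨E', rfl⟩ : ∃ E', E = E' + 1 := ⟨E - 1, by omega⟩
  rw [pow_succ, show i = 0 + i from (zero_add i).symm]
  have h1 : NN ((1 + X : PowerSeries ℚ) ^ E') := NN_pow (by simpa using NN_oneAdd 1) E'
  apply coeff_pos_mul h1 (by simpa using NN_oneAdd 1)
  · rw [coeff_zero_eq_constantCoeff_apply, map_pow]
    rw [show (1 + X : PowerSeries ℚ) = 1 + X ^ 1 by rw [pow_one], cc_one_add 1 le_rfl]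
    norm_num
  · interval_cases i <;> simp [map_add, coeff_one, coeff_X]

lemma geom_pow_pos (t N : ℕ) (ht : 1 ≤ t) (hN : 1 ≤ N) (j : ℕ) :
    0 < PowerSeries.coeff (t * j) (((1 - X ^ t : PowerSeries ℚ)⁻¹) ^ N) := by
  obtain ⟨N', rfl⟩ : ∃ N', N = N' + 1 := ⟨N - 1, by omega⟩
  rw [pow_succ, show t * j = 0 + t * j from (zero_add _).symm]
  apply coeff_pos_mul (NN_pow (NN_inv t ht) N') (NN_inv t ht)
  · rw [coeff_zero_eq_constantCoeff_apply, map_pow, PowerSeries.constantCoeff_inv,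
      cc_one_sub t ht]
    norm_num
  · rw [inv_one_sub_pow t ht, coeff_mk, if_pos (dvd_mul_right t j)]
    norm_num

lemma main_pos (E N : ℕ) (hE : 1 ≤ E) (hN : 1 ≤ N) (R : PowerSeries ℚ)
    (hR : NN R) (hR0 : 0 < PowerSeries.coeff 0 R) (g : ℕ) :
    0 < PowerSeries.coeff g
      ((1 + X ^ (1 : ℕ)) ^ E * ((((1 - X ^ (2 * 1) : PowerSeries ℚ))⁻¹) ^ N * R)) := by
  have hg : g = g % 2 + (2 * (g / 2) + 0) := by omega
  rw [pow_one, show (2 * 1 : ℕ) = 2 by norm_num, hg]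
  have hNN2 : NN (((1 - X ^ 2 : PowerSeries ℚ)⁻¹) ^ N) := NN_pow (NN_inv 2 (by norm_num)) N
  apply coeff_pos_mul (NN_pow (by simpa using NN_oneAdd 1) E) (NN_mul hNN2 hR)
  · exact coeff_onePlusX_pow_pos E hE (Nat.le_of_lt_succ (Nat.mod_lt g (by norm_num)))
  · exact coeff_pos_mul hNN2 hR (geom_pow_pos 2 N (by norm_num) hN (g / 2)) hR0

lemma cc_A (s : Finset ℕ) (hs : ∀ r ∈ s, 1 ≤ r) (E : ℕ) :
    constantCoeff (∏ r ∈ s, (1 + X ^ r : PowerSeries ℚ) ^ E) = 1 := by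
  rw [map_prod, Finset.prod_eq_one]
  intro r hr
  rw [map_pow, cc_one_add r (hs r hr), one_pow]

lemma cc_B (s : Finset ℕ) (hs : ∀ r ∈ s, 1 ≤ r) (N : ℕ) :
    constantCoeff (∏ r ∈ s, ((1 - X ^ (2 * r) : PowerSeries ℚ)⁻¹) ^ N) = 1 := by
  rw [map_prod, Finset.prod_eq_one]
  intro r hr
  rw [map_pow, PowerSeries.constantCoeff_inv, cc_one_sub (2 * r) (by have := hs r hr; omega),
    inv_one, one_pow]

end Stmt3Aux

open Stmt3Aux in
theorem stmt3 (e : ℤ) (he : Even e) (hpos : 0 < e) (hle : e ≤ 20) :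
    ∀ g : ℕ, 1 ≤ g → 0 < (-1 : ℚ) ^ g * W e g := by
  obtain ⟨d, hd⟩ := he
  intro g hg
  set E := e.toNat with hEdef
  set M := ((24 - e) / 2).toNat with hMdef
  have hE1 : 1 ≤ E := by omega
  have hM1 : 1 ≤ M := by omega
  -- unfold zp
  have hzp1 : ∀ r : ℕ, zp (1 + X ^ r) (-e) = ((1 + X ^ r : PowerSeries ℚ)⁻¹) ^ E := by
    intro r; rw [zp, if_neg (by omega), neg_neg]
  have hzp2 : ∀ s : ℕ, zp (1 - X ^ (2 * s)) (-((24 - e) / 2)) =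
      ((1 - X ^ (2 * s) : PowerSeries ℚ)⁻¹) ^ M := by
    intro s; rw [zp, if_neg (by omega), neg_neg]
  have hW : W e g = PowerSeries.coeff g
      ((∏ r ∈ Icc 1 g, ((1 + X ^ r : PowerSeries ℚ)⁻¹) ^ E) *
       (∏ s ∈ Icc 1 g, ((1 - X ^ (2 * s) : PowerSeries ℚ)⁻¹) ^ M)) := by
    rw [W]; simp_rw [hzp1, hzp2]
  -- rewrite via key identity
  have hstep1 : (∏ r ∈ Icc 1 g, ((1 + X ^ r : PowerSeries ℚ)⁻¹) ^ E) =
      (∏ r ∈ Icc 1 g, (1 - X ^ r : PowerSeries ℚ) ^ E) *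
      (∏ r ∈ Icc 1 g, ((1 - X ^ (2 * r) : PowerSeries ℚ)⁻¹) ^ E) := by
    rw [← Finset.prod_mul_distrib]
    refine Finset.prod_congr rfl fun r hr => ?_
    rw [Finset.mem_Icc] at hr
    rw [key r hr.1, mul_pow]
  have hstep2 :
      (∏ r ∈ Icc 1 g, ((1 - X ^ (2 * r) : PowerSeries ℚ)⁻¹) ^ E) *
      (∏ s ∈ Icc 1 g, ((1 - X ^ (2 * s) : PowerSeries ℚ)⁻¹) ^ M) =
      ∏ s ∈ Icc 1 g, ((1 - X ^ (2 * s) : PowerSeries ℚ)⁻¹) ^ (E + M) := by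
    rw [← Finset.prod_mul_distrib]
    exact Finset.prod_congr rfl fun s _ => (pow_add _ _ _).symm
  have hW2 : W e g = PowerSeries.coeff g
      ((∏ r ∈ Icc 1 g, (1 - X ^ r : PowerSeries ℚ) ^ E) *
       (∏ s ∈ Icc 1 g, ((1 - X ^ (2 * s) : PowerSeries ℚ)⁻¹) ^ (E + M))) := by
    rw [hW, hstep1, mul_assoc, hstep2]
  -- apply rescale (-1)
  have hresP : rescale (-1 : ℚ) (∏ r ∈ Icc 1 g, (1 - X ^ r : PowerSeries ℚ) ^ E) =
      ∏ r ∈ Icc 1 g, (1 - (-X : PowerSeries ℚ) ^ r) ^ E := by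
    rw [map_prod]
    exact Finset.prod_congr rfl fun r _ => by
      rw [map_pow, map_sub, map_one, map_pow, rescale_neg_one_X]
  have hresQ : rescale (-1 : ℚ)
      (∏ s ∈ Icc 1 g, ((1 - X ^ (2 * s) : PowerSeries ℚ)⁻¹) ^ (E + M)) =
      ∏ s ∈ Icc 1 g, ((1 - X ^ (2 * s) : PowerSeries ℚ)⁻¹) ^ (E + M) := by
    rw [map_prod]
    refine Finset.prod_congr rfl fun s hs => ?_
    rw [Finset.mem_Icc] at hs
    have hc : constantCoeff (R := ℚ) (1 - X ^ (2 * s)) ≠ 0 := by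
      rw [cc_one_sub (2 * s) (by omega)]; norm_num
    rw [map_pow, rescale_inv _ hc, map_sub, map_one, map_pow, rescale_neg_one_X,
      Even.neg_pow ⟨s, two_mul s⟩]
  have hres : (-1 : ℚ) ^ g * W e g = PowerSeries.coeff g
      ((∏ r ∈ Icc 1 g, (1 - (-X : PowerSeries ℚ) ^ r) ^ E) *
       (∏ s ∈ Icc 1 g, ((1 - X ^ (2 * s) : PowerSeries ℚ)⁻¹) ^ (E + M))) := by
    rw [← hresP, ← hresQ, ← map_mul, coeff_rescale, hW2]
  rw [hres]
  -- switch to Ioc and split by parity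
  have hIcc : Icc 1 g = Ioc 0 g := by
    ext x; simp only [Finset.mem_Icc, Finset.mem_Ioc]; omega
  rw [hIcc]
  set H := g / 2 with hHdef
  have hsplit : (∏ r ∈ Ioc 0 g, (1 - (-X : PowerSeries ℚ) ^ r) ^ E) =
      (∏ r ∈ (Ioc 0 g).filter (fun r => Odd r), (1 + X ^ r : PowerSeries ℚ) ^ E) *
      (∏ k ∈ Ioc 0 H, (1 - X ^ (2 * k) : PowerSeries ℚ) ^ E) := by
    rw [← Finset.prod_filter_mul_prod_filter_not (Ioc 0 g) (fun r => Odd r)]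
    congr 1
    · refine Finset.prod_congr rfl fun r hr => ?_
      have ho : Odd r := (Finset.mem_filter.mp hr).2
      rw [ho.neg_pow, sub_neg_eq_add]
    · have himg : (Ioc 0 g).filter (fun r => ¬ Odd r) = (Ioc 0 H).image (fun k => 2 * k) := by
        ext x
        simp only [Finset.mem_filter, Finset.mem_Ioc, Finset.mem_image, Nat.odd_iff, hHdef]
        constructor
        · rintro ⟨⟨h1, h2⟩, h3⟩
          exact ⟨x / 2, ⟨by omega, by omega⟩, by omega⟩
        · rintro ⟨k, ⟨hk1, hk2⟩, rfl⟩
          omega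
      rw [himg, Finset.prod_image (fun a _ b _ h => by omega)]
      refine Finset.prod_congr rfl fun k hk => ?_
      rw [Even.neg_pow ⟨k, two_mul k⟩]
  have hQsplit : (∏ s ∈ Ioc 0 g, ((1 - X ^ (2 * s) : PowerSeries ℚ)⁻¹) ^ (E + M)) =
      (∏ s ∈ Ioc 0 H, ((1 - X ^ (2 * s) : PowerSeries ℚ)⁻¹) ^ (E + M)) *
      (∏ s ∈ Ioc H g, ((1 - X ^ (2 * s) : PowerSeries ℚ)⁻¹) ^ (E + M)) :=
    (Finset.prod_Ioc_consecutive _ (Nat.zero_le H) (Nat.div_le_self g 2)).symm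
  have hmerge : (∏ k ∈ Ioc 0 H, (1 - X ^ (2 * k) : PowerSeries ℚ) ^ E) *
      (∏ s ∈ Ioc 0 H, ((1 - X ^ (2 * s) : PowerSeries ℚ)⁻¹) ^ (E + M)) =
      ∏ k ∈ Ioc 0 H, ((1 - X ^ (2 * k) : PowerSeries ℚ)⁻¹) ^ M := by
    rw [← Finset.prod_mul_distrib]
    refine Finset.prod_congr rfl fun k hk => ?_
    rw [Finset.mem_Ioc] at hk
    have hc : constantCoeff (R := ℚ) (1 - X ^ (2 * k)) ≠ 0 := by
      rw [cc_one_sub (2 * k) (by omega)]; norm_num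
    rw [pow_add, ← mul_assoc, ← mul_pow, PowerSeries.mul_inv_cancel _ hc, one_pow, one_mul]
  rw [hsplit, hQsplit, show
    ((∏ r ∈ (Ioc 0 g).filter (fun r => Odd r), (1 + X ^ r : PowerSeries ℚ) ^ E) *
      (∏ k ∈ Ioc 0 H, (1 - X ^ (2 * k) : PowerSeries ℚ) ^ E)) *
     ((∏ s ∈ Ioc 0 H, ((1 - X ^ (2 * s) : PowerSeries ℚ)⁻¹) ^ (E + M)) *
      (∏ s ∈ Ioc H g, ((1 - X ^ (2 * s) : PowerSeries ℚ)⁻¹) ^ (E + M))) =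
    (∏ r ∈ (Ioc 0 g).filter (fun r => Odd r), (1 + X ^ r : PowerSeries ℚ) ^ E) *
     (((∏ k ∈ Ioc 0 H, (1 - X ^ (2 * k) : PowerSeries ℚ) ^ E) *
       (∏ s ∈ Ioc 0 H, ((1 - X ^ (2 * s) : PowerSeries ℚ)⁻¹) ^ (E + M))) *
      (∏ s ∈ Ioc H g, ((1 - X ^ (2 * s) : PowerSeries ℚ)⁻¹) ^ (E + M))) from by ring, hmerge]
  -- now everything has nonnegative coefficients; extract positive part
  have h1A : (1 : ℕ) ∈ (Ioc 0 g).filter (fun r => Odd r) := by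
    simp only [Finset.mem_filter, Finset.mem_Ioc]
    exact ⟨⟨one_pos, hg⟩, odd_one⟩
  have hsubA : ∀ r ∈ ((Ioc 0 g).filter (fun r => Odd r)).erase 1, (1 : ℕ) ≤ r := by
    intro r hr
    have := Finset.mem_Ioc.mp (Finset.mem_filter.mp (Finset.mem_of_mem_erase hr)).1
    omega
  have hNNA' : NN (∏ r ∈ ((Ioc 0 g).filter (fun r => Odd r)).erase 1,
      (1 + X ^ r : PowerSeries ℚ) ^ E) :=
    NN_prod fun r _ => NN_pow (NN_oneAdd r) E
  have hNNQ2 : NN (∏ s ∈ Ioc H g, ((1 - X ^ (2 * s) : PowerSeries ℚ)⁻¹) ^ (E + M)) :=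
    NN_prod fun s hs => NN_pow (NN_inv _ (by
      have := (Finset.mem_Ioc.mp hs).1; omega)) _
  rcases Nat.lt_or_ge g 2 with hg2 | hg2
  · -- g = 1 : H = 0
    have hgeq : g = 1 := by omega
    subst hgeq
    have hH0 : H = 0 := by omega
    have hfilt : (Ioc 0 1).filter (fun r => Odd r) = {1} := by
      ext x
      simp only [Finset.mem_filter, Finset.mem_Ioc, Nat.odd_iff, Finset.mem_singleton]
      omega
    rw [hfilt, Finset.prod_singleton, hH0, Finset.Ioc_self, Finset.prod_empty, one_mul,
      show (Ioc 0 1 : Finset ℕ) = {1} from rfl, Finset.prod_singleton]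
    rw [show (1 + X ^ (1:ℕ) : PowerSeries ℚ) ^ E * ((1 - X ^ (2 * 1) : PowerSeries ℚ)⁻¹) ^ (E + M) =
      (1 + X ^ (1:ℕ) : PowerSeries ℚ) ^ E * (((1 - X ^ (2 * 1) : PowerSeries ℚ)⁻¹) ^ (E + M) * 1)
      from by ring]
    refine main_pos E (E + M) hE1 (by omega) 1 NN_one ?_ 1
    rw [coeff_zero_eq_constantCoeff_apply, map_one]
    norm_num
  · -- g ≥ 2 : H ≥ 1
    have h1B : (1 : ℕ) ∈ Ioc 0 H := by
      rw [Finset.mem_Ioc]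
      constructor
      · omega
      · rw [hHdef]; omega
    have hsubB : ∀ k ∈ (Ioc 0 H).erase 1, (1 : ℕ) ≤ k := by
      intro k hk
      have := Finset.mem_Ioc.mp (Finset.mem_of_mem_erase hk)
      omega
    have hNNB' : NN (∏ k ∈ (Ioc 0 H).erase 1, ((1 - X ^ (2 * k) : PowerSeries ℚ)⁻¹) ^ M) :=
      NN_prod fun k hk => NN_pow (NN_inv _ (by have := hsubB k hk; omega)) M
    rw [← Finset.mul_prod_erase _ _ h1A, ← Finset.mul_prod_erase _ _ h1B]
    rw [show ((1 + X ^ (1:ℕ) : PowerSeries ℚ) ^ E *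
        ∏ r ∈ ((Ioc 0 g).filter (fun r => Odd r)).erase 1, (1 + X ^ r : PowerSeries ℚ) ^ E) *
        ((((1 - X ^ (2 * 1) : PowerSeries ℚ)⁻¹) ^ M *
          ∏ k ∈ (Ioc 0 H).erase 1, ((1 - X ^ (2 * k) : PowerSeries ℚ)⁻¹) ^ M) *
         ∏ s ∈ Ioc H g, ((1 - X ^ (2 * s) : PowerSeries ℚ)⁻¹) ^ (E + M)) =
      (1 + X ^ (1:ℕ) : PowerSeries ℚ) ^ E * (((1 - X ^ (2 * 1) : PowerSeries ℚ)⁻¹) ^ M *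
        ((∏ r ∈ ((Ioc 0 g).filter (fun r => Odd r)).erase 1, (1 + X ^ r : PowerSeries ℚ) ^ E) *
         ((∏ k ∈ (Ioc 0 H).erase 1, ((1 - X ^ (2 * k) : PowerSeries ℚ)⁻¹) ^ M) *
          ∏ s ∈ Ioc H g, ((1 - X ^ (2 * s) : PowerSeries ℚ)⁻¹) ^ (E + M))))
      from by ring]
    refine main_pos E M hE1 hM1 _ (NN_mul hNNA' (NN_mul hNNB' hNNQ2)) ?_ g
    rw [coeff_zero_eq_constantCoeff_apply, map_mul, map_mul, cc_A _ hsubA,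
      cc_B _ hsubB, cc_B _ (fun s hs => by have := (Finset.mem_Ioc.mp hs).1; omega)]
    norm_num
end

section
/- The coefficients $c_g$ of the formal power series $\prod_{s \ge 1}(1-q^s)^{-24}$ satisfy $c_g \equiv 0 \pmod 2$ for every $g \ge 1$ with $g \not\equiv 0 \pmod 8$. -/
open PowerSeries Finset

/-! ### Auxiliary material -/

/-- Integer power-series inverse of `1 - X^s`. -/
noncomputable def invZ (s : ℕ) : PowerSeries ℤ :=
  PowerSeries.invOfUnit (1 - PowerSeries.X ^ s) 1

lemma constCoeff_one_sub_X_pow (R : Type*) [CommRing R] (s : ℕ) (hs : 1 ≤ s) :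
    constantCoeff (1 - PowerSeries.X ^ s : PowerSeries R) = 1 := by
  simp [map_sub, map_pow, constantCoeff_X, zero_pow (by omega : s ≠ 0)]

lemma one_sub_mul_invZ (s : ℕ) (hs : 1 ≤ s) :
    (1 - PowerSeries.X ^ s) * invZ s = 1 :=
  mul_invOfUnit _ _ (by rw [constCoeff_one_sub_X_pow ℤ s hs, Units.val_one])

/-- The integer truncated Yau–Zaslow product. -/
noncomputable def Pz (g : ℕ) : PowerSeries ℤ :=
  ∏ s ∈ Icc 1 g, (invZ s) ^ 24

lemma map_invZ_eq (s : ℕ) (hs : 1 ≤ s) :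
    PowerSeries.map (Int.castRingHom ℚ) (invZ s) = (1 - PowerSeries.X ^ s)⁻¹ := by
  have hc : constantCoeff (1 - PowerSeries.X ^ s : PowerSeries ℚ) ≠ 0 := by
    rw [constCoeff_one_sub_X_pow ℚ s hs]; exact one_ne_zero
  rw [PowerSeries.eq_inv_iff_mul_eq_one hc]
  have := congrArg (PowerSeries.map (Int.castRingHom ℚ)) (one_sub_mul_invZ s hs)
  rw [map_mul, map_one] at this
  have hmap : PowerSeries.map (Int.castRingHom ℚ) (1 - PowerSeries.X ^ s)
      = 1 - PowerSeries.X ^ s := by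
    simp [map_sub, map_pow]
  rw [hmap] at this
  rw [mul_comm]; exact this

lemma map_Pz (g : ℕ) :
    PowerSeries.map (Int.castRingHom ℚ) (Pz g)
      = ∏ s ∈ Icc 1 g, ((1 - PowerSeries.X ^ s)⁻¹) ^ 24 := by
  rw [Pz, map_prod]
  refine Finset.prod_congr rfl fun s hs => ?_
  rw [map_pow, map_invZ_eq s (mem_Icc.mp hs).1]

lemma C_eq_intCast (g : ℕ) : _root_.C g = ((PowerSeries.coeff g (Pz g) : ℤ) : ℚ) := by
  have hC : _root_.C g = PowerSeries.coeff g
      (∏ s ∈ Icc 1 g, ((1 - PowerSeries.X ^ s)⁻¹) ^ 24) := rfl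
  rw [hC, ← map_Pz, PowerSeries.coeff_map]; rfl

/-- Support predicate: all coefficients away from multiples of 8 vanish. -/
def Supp8 (f : PowerSeries (ZMod 2)) : Prop :=
  ∀ n : ℕ, ¬ (8 ∣ n) → PowerSeries.coeff n f = 0

lemma Sup_one : Supp8 1 := by
  intro n hn
  rw [PowerSeries.coeff_one, if_neg (by rintro rfl; exact hn ⟨0, rfl⟩)]

lemma Sup_mul {f h : PowerSeries (ZMod 2)} (hf : Supp8 f) (hh : Supp8 h) : Supp8 (f * h) := by
  intro n hn
  rw [PowerSeries.coeff_mul]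
  refine Finset.sum_eq_zero fun p hp => ?_
  have hpn : p.1 + p.2 = n := Finset.HasAntidiagonal.mem_antidiagonal.mp hp
  by_cases h1 : 8 ∣ p.1
  · have h2 : ¬ 8 ∣ p.2 := fun h2 => hn (hpn ▸ Nat.dvd_add h1 h2)
    rw [hh p.2 h2, mul_zero]
  · rw [hf p.1 h1, zero_mul]

lemma Sup_pow {f : PowerSeries (ZMod 2)} (hf : Supp8 f) (k : ℕ) : Supp8 (f ^ k) := by
  induction k with
  | zero => simpa using Sup_one
  | succ k ih => rw [pow_succ]; exact Sup_mul ih hf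

lemma Sup_one_add_X_pow (s : ℕ) : Supp8 (1 + PowerSeries.X ^ (8 * s)) := by
  intro n hn
  rw [map_add, PowerSeries.coeff_one, PowerSeries.coeff_X_pow,
    if_neg (by rintro rfl; exact hn ⟨0, rfl⟩),
    if_neg (by rintro rfl; exact hn ⟨s, rfl⟩), add_zero]

lemma coeff_vanish {P Q : PowerSeries (ZMod 2)} (hPQ : P * Q = 1) (hQ : Supp8 Q)
    (hQ0 : PowerSeries.coeff 0 Q = 1) :
    ∀ n : ℕ, ¬ (8 ∣ n) → PowerSeries.coeff n P = 0 := by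
  intro n
  induction n using Nat.strong_induction_on with
  | _ n ih =>
    intro hn
    have hn0 : n ≠ 0 := by rintro rfl; exact hn ⟨0, rfl⟩
    have h1 : PowerSeries.coeff n (P * Q) = 0 := by
      rw [hPQ, PowerSeries.coeff_one, if_neg hn0]
    rw [PowerSeries.coeff_mul, Finset.sum_eq_single (n, 0)] at h1
    · rwa [hQ0, mul_one] at h1
    · intro b hb hbne
      have hbn : b.1 + b.2 = n := Finset.HasAntidiagonal.mem_antidiagonal.mp hb
      have hb2 : b.2 ≠ 0 := by
        rintro h0
        exact hbne (Prod.ext (by omega) h0)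
      by_cases h8 : 8 ∣ b.2
      · have hb1 : ¬ 8 ∣ b.1 := fun h => hn (hbn ▸ Nat.dvd_add h h8)
        rw [ih b.1 (by omega) hb1, zero_mul]
      · rw [hQ b.2 h8, mul_zero]
    · intro h
      exact absurd (Finset.HasAntidiagonal.mem_antidiagonal.mpr (by omega)) h

theorem stmt7 (g : ℕ) (hg : 1 ≤ g) (h8 : ¬ (8 ∣ g)) :
    ∃ k : ℤ, _root_.C g = 2 * k := by
  haveI : CharP (PowerSeries (ZMod 2)) 2 :=
    charP_of_injective_ringHom (PowerSeries.C_injective (R := ZMod 2)) 2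
  set π := Int.castRingHom (ZMod 2)
  set P : PowerSeries (ZMod 2) := PowerSeries.map π (Pz g) with hP
  set Q : PowerSeries (ZMod 2) := ∏ s ∈ Icc 1 g, (1 - PowerSeries.X ^ s) ^ 24 with hQdef
  -- P * Q = 1
  have hPQ : P * Q = 1 := by
    rw [hP, Pz, map_prod, hQdef, ← Finset.prod_mul_distrib]
    refine Finset.prod_eq_one fun s hs => ?_
    have hs1 : 1 ≤ s := (mem_Icc.mp hs).1
    have := congrArg (PowerSeries.map π) (one_sub_mul_invZ s hs1)
    rw [map_mul, map_one] at this
    have hmap : PowerSeries.map π (1 - PowerSeries.X ^ s) = 1 - PowerSeries.X ^ s := by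
      simp [map_sub, map_pow]
    rw [hmap] at this
    rw [map_pow, ← mul_pow, mul_comm, this, one_pow]
  -- Q is supported on multiples of 8
  have hQfact : ∀ s : ℕ, (1 - PowerSeries.X ^ s : PowerSeries (ZMod 2)) ^ 24
      = (1 + PowerSeries.X ^ (8 * s)) ^ 3 := by
    intro s
    have h1 : (1 - PowerSeries.X ^ s : PowerSeries (ZMod 2))
        = 1 + PowerSeries.X ^ s := CharTwo.sub_eq_add _ _
    have h2 : ((1 : PowerSeries (ZMod 2)) + PowerSeries.X ^ s) ^ (2 ^ 3)
        = 1 + PowerSeries.X ^ (8 * s) := by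
      rw [add_pow_char_pow]
      norm_num [← pow_mul, mul_comm s 8]
    calc (1 - PowerSeries.X ^ s : PowerSeries (ZMod 2)) ^ 24
        = ((1 + PowerSeries.X ^ s) ^ (2 ^ 3)) ^ 3 := by rw [h1, ← pow_mul]; norm_num
      _ = (1 + PowerSeries.X ^ (8 * s)) ^ 3 := by rw [h2]
  have hQ : Supp8 Q := by
    rw [hQdef]
    refine Finset.prod_induction _ Supp8 (fun a b => Sup_mul) Sup_one fun s hs => ?_
    rw [hQfact s]
    exact Sup_pow (Sup_one_add_X_pow s) 3
  have hQ0 : PowerSeries.coeff 0 Q = 1 := by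
    rw [PowerSeries.coeff_zero_eq_constantCoeff, hQdef, map_prod]
    refine Finset.prod_eq_one fun s hs => ?_
    rw [map_pow, constCoeff_one_sub_X_pow (ZMod 2) s (mem_Icc.mp hs).1, one_pow]
  -- conclude
  have hcoeff : PowerSeries.coeff g P = 0 := coeff_vanish hPQ hQ hQ0 g h8
  rw [hP, PowerSeries.coeff_map] at hcoeff
  have hdvd : (2 : ℤ) ∣ PowerSeries.coeff g (Pz g) := by
    have := (ZMod.intCast_zmod_eq_zero_iff_dvd (PowerSeries.coeff g (Pz g)) 2).mp hcoeff
    exact_mod_cast this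
  obtain ⟨k, hk⟩ := hdvd
  exact ⟨k, by rw [C_eq_intCast, hk]; push_cast; ring⟩
end

section
/- If $e \equiv 0 \pmod 4$, then the coefficients $w_g$ of $\prod_{r \ge 1}(1+q^r)^{-e}\prod_{s \ge 1}(1-q^{2s})^{-(24-e)/2}$ and $c_g$ of $\prod_{s \ge 1}(1-q^s)^{-24}$ satisfy $w_g \equiv c_g \pmod 4$ for all $g \ge 0$; moreover $w_g \equiv c_g \equiv 0 \pmod 4$ whenever $g \ge 1$ and $g \not\equiv 0 \pmod 4$. -/
open PowerSeries Finset

/-! ### Auxiliary constructions -/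

/-- A power series with constant coefficient `1` as a unit. -/
noncomputable def mkU {R : Type*} [CommRing R] (F : PowerSeries R)
    (h : constantCoeff (R := R) F = 1) : (PowerSeries R)ˣ :=
  Units.mkOfMulEqOne F (invOfUnit F 1) (mul_invOfUnit F 1 (by simp [h]))

@[simp] lemma mkU_val {R : Type*} [CommRing R] (F : PowerSeries R)
    (h : constantCoeff (R := R) F = 1) : ((mkU F h : (PowerSeries R)ˣ) : PowerSeries R) = F := rfl

noncomputable abbrev phi : PowerSeries ℤ →+* PowerSeries ℚ :=
  PowerSeries.map (Int.castRingHom ℚ)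

noncomputable abbrev psi : PowerSeries ℤ →+* PowerSeries (ZMod 4) :=
  PowerSeries.map (Int.castRingHom (ZMod 4))

lemma phi_inv {F : PowerSeries ℤ} (h : constantCoeff (R := ℤ) F = 1) :
    (phi F)⁻¹ = phi ↑((mkU F h)⁻¹) := by
  have hc : constantCoeff (R := ℚ) (phi F) ≠ 0 := by
    rw [show constantCoeff (R := ℚ) (phi F) = ((constantCoeff (R := ℤ) F : ℤ) : ℚ) from rfl, h]
    norm_num
  rw [PowerSeries.inv_eq_iff_mul_eq_one hc, ← map_mul]
  rw [show ((mkU F h)⁻¹ : (PowerSeries ℤ)ˣ) * F = ((mkU F h)⁻¹ * mkU F h : (PowerSeries ℤ)ˣ)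
    from rfl]
  simp

lemma zp_phi {F : PowerSeries ℤ} (h : constantCoeff (R := ℤ) F = 1) (n : ℤ) :
    zp (phi F) n = phi ↑((mkU F h) ^ n) := by
  unfold zp
  split_ifs with hn
  · rw [show (mkU F h) ^ n = (mkU F h) ^ n.toNat by
      rw [← zpow_natCast, Int.toNat_of_nonneg hn]]
    rw [Units.val_pow_eq_pow_val, map_pow, mkU_val]
  · rw [show (mkU F h) ^ n = ((mkU F h)⁻¹) ^ (-n).toNat by
      rw [← zpow_natCast, Int.toNat_of_nonneg (by omega), zpow_neg, inv_zpow, inv_inv]]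
    rw [Units.val_pow_eq_pow_val, map_pow, phi_inv h]

/-- The "supported on multiples of 4" predicate. -/
def Supp4 {R : Type*} [CommRing R] (f : PowerSeries R) : Prop :=
  ∀ n : ℕ, ¬ (4 ∣ n) → PowerSeries.coeff (R := R) n f = 0

lemma Supp4.one {R : Type*} [CommRing R] : Supp4 (1 : PowerSeries R) := by
  intro n hn
  have : n ≠ 0 := by rintro rfl; exact hn ⟨0, rfl⟩
  simp [PowerSeries.coeff_one, this]

lemma Supp4.mul {R : Type*} [CommRing R] {f g : PowerSeries R}
    (hf : Supp4 f) (hg : Supp4 g) : Supp4 (f * g) := by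
  intro n hn
  rw [PowerSeries.coeff_mul]
  apply Finset.sum_eq_zero
  rintro ⟨i, j⟩ hij
  have hij' : i + j = n := Finset.HasAntidiagonal.mem_antidiagonal.mp hij
  by_cases h4 : 4 ∣ i
  · have : ¬ (4 ∣ j) := by rintro ⟨c, rfl⟩; obtain ⟨d, rfl⟩ := h4; exact hn ⟨d + c, by omega⟩
    simp [hg j this]
  · simp [hf i h4]

lemma Supp4.pow {R : Type*} [CommRing R] {f : PowerSeries R}
    (hf : Supp4 f) (k : ℕ) : Supp4 (f ^ k) := by
  induction k with
  | zero => simpa using Supp4.one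
  | succ k ih => rw [pow_succ]; exact ih.mul hf

lemma Supp4.unit_inv {R : Type*} [CommRing R] (u : (PowerSeries R)ˣ)
    (hu : Supp4 (u : PowerSeries R)) : Supp4 ((↑u⁻¹ : PowerSeries R)) := by
  intro n hn
  induction n using Nat.strong_induction_on with
  | _ n ih =>
  have hn0 : n ≠ 0 := by rintro rfl; exact hn ⟨0, rfl⟩
  have h1 : PowerSeries.coeff (R := R) n ((u : PowerSeries R) * (↑u⁻¹ : PowerSeries R)) = 0 := by
    rw [show (u : PowerSeries R) * (↑u⁻¹ : PowerSeries R) = ((u * u⁻¹ : (PowerSeries R)ˣ) :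
      PowerSeries R) from rfl]
    simp [PowerSeries.coeff_one, hn0]
  rw [PowerSeries.coeff_mul] at h1
  rw [Finset.sum_eq_single ((0 : ℕ), n)] at h1
  · have hcu : IsUnit (constantCoeff (R := R) (u : PowerSeries R)) :=
      (isUnit_constantCoeff _ u.isUnit)
    have h2 : constantCoeff (R := R) (u : PowerSeries R) *
        PowerSeries.coeff (R := R) n ((↑u⁻¹ : PowerSeries R)) = 0 := by
      simpa [PowerSeries.coeff_zero_eq_constantCoeff] using h1
    exact hcu.mul_right_eq_zero.mp h2
  · rintro ⟨i, j⟩ hij hne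
    have hij' : i + j = n := Finset.HasAntidiagonal.mem_antidiagonal.mp hij
    have hi : i ≠ 0 := by rintro rfl; exact hne (by simp [← hij'])
    by_cases h4 : 4 ∣ i
    · have hj4 : ¬ (4 ∣ j) := by
        rintro ⟨c, rfl⟩; obtain ⟨d, rfl⟩ := h4; exact hn ⟨d + c, by omega⟩
      have hjn : j < n := by omega
      simp [ih j hjn hj4]
    · simp [hu i h4]
  · intro h; exact absurd (Finset.HasAntidiagonal.mem_antidiagonal.mpr (by simp)) h

lemma Supp4.prod {R : Type*} [CommRing R] {ι : Type*} (t : Finset ι)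
    (f : ι → PowerSeries R) (hf : ∀ i ∈ t, Supp4 (f i)) : Supp4 (∏ i ∈ t, f i) := by
  classical
  induction t using Finset.induction_on with
  | empty => simpa using Supp4.one
  | insert _ _ hx ih =>
    rename_i a s
    rw [Finset.prod_insert hx]
    exact (hf a (Finset.mem_insert_self a s)).mul
      (ih fun i hi => hf i (Finset.mem_insert_of_mem hi))

/-! ### Unit families over ℤ -/

lemma constCoeff_one_add_pow (r : ℕ) (hr : 1 ≤ r) :
    constantCoeff (R := ℤ) (1 + X ^ r) = 1 := by
  rw [map_add, map_one, map_pow, constantCoeff_X, zero_pow (by omega), add_zero]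

lemma constCoeff_one_sub_pow (r : ℕ) (hr : 1 ≤ r) :
    constantCoeff (R := ℤ) (1 - X ^ r) = 1 := by
  rw [map_sub, map_one, map_pow, constantCoeff_X, zero_pow (by omega), sub_zero]

noncomputable def uA (r : ℕ) : (PowerSeries ℤ)ˣ :=
  if h : 1 ≤ r then mkU (1 + X ^ r) (constCoeff_one_add_pow r h) else 1

noncomputable def uB (s : ℕ) : (PowerSeries ℤ)ˣ :=
  if h : 1 ≤ s then mkU (1 - X ^ (2 * s)) (constCoeff_one_sub_pow _ (by omega)) else 1

noncomputable def uD (s : ℕ) : (PowerSeries ℤ)ˣ :=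
  if h : 1 ≤ s then mkU (1 - X ^ s) (constCoeff_one_sub_pow _ h) else 1

lemma uA_val {r : ℕ} (h : 1 ≤ r) : ((uA r : (PowerSeries ℤ)ˣ) : PowerSeries ℤ) = 1 + X ^ r := by
  rw [uA, dif_pos h, mkU_val]

lemma uB_val {s : ℕ} (h : 1 ≤ s) :
    ((uB s : (PowerSeries ℤ)ˣ) : PowerSeries ℤ) = 1 - X ^ (2 * s) := by
  rw [uB, dif_pos h, mkU_val]

lemma uD_val {s : ℕ} (h : 1 ≤ s) : ((uD s : (PowerSeries ℤ)ˣ) : PowerSeries ℤ) = 1 - X ^ s := by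
  rw [uD, dif_pos h, mkU_val]

/-- Integer-series versions of the truncated products. -/
noncomputable def Fw (e : ℤ) (g : ℕ) : (PowerSeries ℤ)ˣ :=
  (∏ r ∈ Icc 1 g, uA r ^ (-e)) * (∏ s ∈ Icc 1 g, uB s ^ (-((24 - e) / 2)))

noncomputable def Fc (g : ℕ) : (PowerSeries ℤ)ˣ :=
  ∏ s ∈ Icc 1 g, uD s ^ (-24 : ℤ)

lemma W_eq (e : ℤ) (g : ℕ) :
    W e g = ((PowerSeries.coeff (R := ℤ) g ((Fw e g : (PowerSeries ℤ)ˣ) : PowerSeries ℤ) : ℤ) : ℚ) := by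
  have h1 : (∏ r ∈ Icc 1 g, zp (1 + PowerSeries.X ^ r) (-e)) =
      phi ↑(∏ r ∈ Icc 1 g, uA r ^ (-e)) := by
    rw [show ((∏ r ∈ Icc 1 g, uA r ^ (-e) : (PowerSeries ℤ)ˣ) : PowerSeries ℤ)
        = ∏ r ∈ Icc 1 g, ((uA r ^ (-e) : (PowerSeries ℤ)ˣ) : PowerSeries ℤ) from
      map_prod (Units.coeHom _) _ _, map_prod]
    refine Finset.prod_congr rfl fun r hr => ?_
    have hr1 : 1 ≤ r := (Finset.mem_Icc.mp hr).1
    have hX : (1 + PowerSeries.X ^ r : PowerSeries ℚ) = phi (1 + X ^ r) := by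
      simp
    rw [hX, zp_phi (constCoeff_one_add_pow r hr1)]
    congr 2
    rw [uA, dif_pos hr1]
  have h2 : (∏ s ∈ Icc 1 g, zp (1 - PowerSeries.X ^ (2 * s)) (-((24 - e) / 2))) =
      phi ↑(∏ s ∈ Icc 1 g, uB s ^ (-((24 - e) / 2))) := by
    rw [show ((∏ s ∈ Icc 1 g, uB s ^ (-((24 - e) / 2)) : (PowerSeries ℤ)ˣ) : PowerSeries ℤ)
        = ∏ s ∈ Icc 1 g, ((uB s ^ (-((24 - e) / 2)) : (PowerSeries ℤ)ˣ) : PowerSeries ℤ) from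
      map_prod (Units.coeHom _) _ _, map_prod]
    refine Finset.prod_congr rfl fun s hs => ?_
    have hs1 : 1 ≤ s := (Finset.mem_Icc.mp hs).1
    have hX : (1 - PowerSeries.X ^ (2 * s) : PowerSeries ℚ) = phi (1 - X ^ (2 * s)) := by
      simp
    rw [hX, zp_phi (constCoeff_one_sub_pow _ (by omega))]
    congr 2
    rw [uB, dif_pos hs1]
  rw [W, h1, h2, ← map_mul, Fw]
  rw [show ((((∏ r ∈ Icc 1 g, uA r ^ (-e)) * ∏ s ∈ Icc 1 g, uB s ^ (-((24 - e) / 2))) :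
      (PowerSeries ℤ)ˣ) : PowerSeries ℤ)
    = ((∏ r ∈ Icc 1 g, uA r ^ (-e) : (PowerSeries ℤ)ˣ) : PowerSeries ℤ) *
      ((∏ s ∈ Icc 1 g, uB s ^ (-((24 - e) / 2)) : (PowerSeries ℤ)ˣ) : PowerSeries ℤ) from rfl]
  rw [PowerSeries.coeff_map, Int.coe_castRingHom]

lemma C_eq (g : ℕ) :
    _root_.C g = ((PowerSeries.coeff (R := ℤ) g ((Fc g : (PowerSeries ℤ)ˣ) : PowerSeries ℤ) : ℤ) : ℚ) := by
  have h1 : (∏ s ∈ Icc 1 g, ((1 - PowerSeries.X ^ s : PowerSeries ℚ)⁻¹) ^ 24) =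
      phi ↑(Fc g) := by
    rw [Fc, show ((∏ s ∈ Icc 1 g, uD s ^ (-24 : ℤ) : (PowerSeries ℤ)ˣ) : PowerSeries ℤ)
        = ∏ s ∈ Icc 1 g, ((uD s ^ (-24 : ℤ) : (PowerSeries ℤ)ˣ) : PowerSeries ℤ) from
      map_prod (Units.coeHom _) _ _, map_prod]
    refine Finset.prod_congr rfl fun s hs => ?_
    have hs1 : 1 ≤ s := (Finset.mem_Icc.mp hs).1
    have hX : (1 - PowerSeries.X ^ s : PowerSeries ℚ) = phi (1 - X ^ s) := by
      simp
    have hinv : (1 - PowerSeries.X ^ s : PowerSeries ℚ)⁻¹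
        = phi ↑((mkU (1 - X ^ s) (constCoeff_one_sub_pow s hs1))⁻¹) := by
      rw [hX, phi_inv]
    have hu : uD s ^ (-24 : ℤ) = (mkU (1 - X ^ s) (constCoeff_one_sub_pow s hs1))⁻¹ ^ 24 := by
      rw [uD, dif_pos hs1, inv_pow, ← zpow_natCast, ← zpow_neg]
      norm_num
    rw [hinv, ← map_pow, hu, Units.val_pow_eq_pow_val]
  rw [show _root_.C g =
    PowerSeries.coeff (R := ℚ) g (∏ s ∈ Icc 1 g, ((1 - PowerSeries.X ^ s)⁻¹) ^ 24) from rfl,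
    h1, PowerSeries.coeff_map, Int.coe_castRingHom]

/-! ### Computations modulo 4 -/

lemma four_eq_zero : (4 : PowerSeries (ZMod 4)) = 0 := by
  have : (4 : PowerSeries (ZMod 4)) = ((4 : ℕ) : PowerSeries (ZMod 4)) := by norm_cast
  rw [this, ← map_natCast (PowerSeries.C (R := ZMod 4)) 4,
    show ((4 : ℕ) : ZMod 4) = 0 by decide, map_zero]

lemma key_add (y : PowerSeries (ZMod 4)) : (1 + y) ^ 4 = (1 - y ^ 2) ^ 2 := by
  linear_combination (y + 2 * y ^ 2 + y ^ 3) * four_eq_zero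

lemma key_sub (y : PowerSeries (ZMod 4)) : (1 - y) ^ 4 = (1 - y ^ 2) ^ 2 := by
  linear_combination (-y + 2 * y ^ 2 - y ^ 3) * four_eq_zero

noncomputable abbrev psiU : (PowerSeries ℤ)ˣ →* (PowerSeries (ZMod 4))ˣ :=
  Units.map (psi : PowerSeries ℤ →* PowerSeries (ZMod 4))

noncomputable def uE (s : ℕ) : (PowerSeries (ZMod 4))ˣ :=
  if h : 1 ≤ s then mkU (1 - X ^ (4 * s)) (by
    rw [map_sub, map_one, map_pow, constantCoeff_X, zero_pow (by omega), sub_zero]) else 1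

lemma uE_val {s : ℕ} (h : 1 ≤ s) :
    ((uE s : (PowerSeries (ZMod 4))ˣ) : PowerSeries (ZMod 4)) = 1 - X ^ (4 * s) := by
  rw [uE, dif_pos h, mkU_val]

lemma psiU_uA_val {r : ℕ} (h : 1 ≤ r) :
    ((psiU (uA r) : (PowerSeries (ZMod 4))ˣ) : PowerSeries (ZMod 4)) = 1 + X ^ r := by
  rw [Units.coe_map, MonoidHom.coe_coe, uA_val h]; simp

lemma psiU_uB_val {s : ℕ} (h : 1 ≤ s) :
    ((psiU (uB s) : (PowerSeries (ZMod 4))ˣ) : PowerSeries (ZMod 4)) = 1 - X ^ (2 * s) := by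
  rw [Units.coe_map, MonoidHom.coe_coe, uB_val h]; simp

lemma psiU_uD_val {s : ℕ} (h : 1 ≤ s) :
    ((psiU (uD s) : (PowerSeries (ZMod 4))ˣ) : PowerSeries (ZMod 4)) = 1 - X ^ s := by
  rw [Units.coe_map, MonoidHom.coe_coe, uD_val h]; simp

lemma uA4 {r : ℕ} (h : 1 ≤ r) : (psiU (uA r)) ^ 4 = (psiU (uB r)) ^ 2 := by
  apply Units.ext
  rw [Units.val_pow_eq_pow_val, Units.val_pow_eq_pow_val, psiU_uA_val h, psiU_uB_val h]
  rw [key_add (X ^ r), ← pow_mul']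

lemma uD4 {s : ℕ} (h : 1 ≤ s) : (psiU (uD s)) ^ 4 = (psiU (uB s)) ^ 2 := by
  apply Units.ext
  rw [Units.val_pow_eq_pow_val, Units.val_pow_eq_pow_val, psiU_uD_val h, psiU_uB_val h]
  rw [key_sub (X ^ s), ← pow_mul']

lemma uB4 {s : ℕ} (h : 1 ≤ s) : (psiU (uB s)) ^ 4 = (uE s) ^ 2 := by
  apply Units.ext
  rw [Units.val_pow_eq_pow_val, Units.val_pow_eq_pow_val, psiU_uB_val h, uE_val h]
  rw [key_sub (X ^ (2 * s)), ← pow_mul]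
  ring_nf

lemma psiU_Fw (e : ℤ) (f : ℤ) (hef : e = 4 * f) (g : ℕ) :
    psiU (Fw e g) = ∏ s ∈ Icc 1 g, (psiU (uB s)) ^ (-12 : ℤ) := by
  rw [Fw, map_mul, map_prod, map_prod]
  have h1 : ∀ r ∈ Icc 1 g, psiU (uA r ^ (-e)) = (psiU (uB r)) ^ ((-2 : ℤ) * f) := by
    intro r hr
    have hr1 : 1 ≤ r := (Finset.mem_Icc.mp hr).1
    rw [map_zpow, show -e = (4 : ℤ) * (-f) by omega, zpow_mul,
      show ((4 : ℤ)) = ((4 : ℕ) : ℤ) by norm_num, zpow_natCast, uA4 hr1,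
      ← zpow_natCast ((psiU (uB r))) 2, ← zpow_mul]
    norm_num
  have h2 : ∀ s ∈ Icc 1 g, psiU (uB s ^ (-((24 - e) / 2)))
      = (psiU (uB s)) ^ (-((24 - e) / 2)) := fun s _ => map_zpow _ _ _
  rw [Finset.prod_congr rfl h1, Finset.prod_congr rfl h2, ← Finset.prod_mul_distrib]
  refine Finset.prod_congr rfl fun s hs => ?_
  rw [← zpow_add]
  congr 1
  omega

lemma psiU_Fc (g : ℕ) :
    psiU (Fc g) = ∏ s ∈ Icc 1 g, (psiU (uB s)) ^ (-12 : ℤ) := by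
  rw [Fc, map_prod]
  refine Finset.prod_congr rfl fun s hs => ?_
  have hs1 : 1 ≤ s := (Finset.mem_Icc.mp hs).1
  rw [map_zpow, show (-24 : ℤ) = (4 : ℤ) * (-6) by norm_num, zpow_mul,
    show ((4 : ℤ)) = ((4 : ℕ) : ℤ) by norm_num, zpow_natCast, uD4 hs1,
    ← zpow_natCast ((psiU (uB s))) 2, ← zpow_mul]
  norm_num

lemma prod_uB_eq (g : ℕ) :
    (∏ s ∈ Icc 1 g, (psiU (uB s)) ^ (-12 : ℤ)) = ∏ s ∈ Icc 1 g, (uE s) ^ (-6 : ℤ) := by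
  refine Finset.prod_congr rfl fun s hs => ?_
  have hs1 : 1 ≤ s := (Finset.mem_Icc.mp hs).1
  rw [show (-12 : ℤ) = (4 : ℤ) * (-3) by norm_num, zpow_mul,
    show ((4 : ℤ)) = ((4 : ℕ) : ℤ) by norm_num, zpow_natCast, uB4 hs1,
    ← zpow_natCast ((uE s)) 2, ← zpow_mul]
  norm_num

lemma supp4_prod_uE (g : ℕ) :
    Supp4 ((∏ s ∈ Icc 1 g, (uE s) ^ (-6 : ℤ) : (PowerSeries (ZMod 4))ˣ) :
      PowerSeries (ZMod 4)) := by
  rw [show ((∏ s ∈ Icc 1 g, (uE s) ^ (-6 : ℤ) : (PowerSeries (ZMod 4))ˣ) :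
      PowerSeries (ZMod 4)) = ∏ s ∈ Icc 1 g,
      (((uE s) ^ (-6 : ℤ) : (PowerSeries (ZMod 4))ˣ) : PowerSeries (ZMod 4)) from
    map_prod (Units.coeHom _) _ _]
  apply Supp4.prod
  intro s hs
  have hs1 : 1 ≤ s := (Finset.mem_Icc.mp hs).1
  rw [show (uE s) ^ (-6 : ℤ) = ((uE s) ^ (6 : ℕ))⁻¹ by
    rw [← zpow_natCast, ← zpow_neg]; norm_num]
  apply Supp4.unit_inv
  rw [Units.val_pow_eq_pow_val, uE_val hs1]
  apply Supp4.pow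
  intro n hn
  rw [map_sub, PowerSeries.coeff_one, PowerSeries.coeff_X_pow]
  have hn0 : n ≠ 0 := by rintro rfl; exact hn ⟨0, rfl⟩
  have hns : n ≠ 4 * s := by rintro rfl; exact hn ⟨s, rfl⟩
  simp [hn0, hns]

lemma coeff_psi (g : ℕ) (F : PowerSeries ℤ) :
    PowerSeries.coeff (R := (ZMod 4)) g (psi F) = ((PowerSeries.coeff (R := ℤ) g F : ℤ) : ZMod 4) := by
  rw [PowerSeries.coeff_map]; rfl

theorem stmt9 (e : ℤ) (he : (4 : ℤ) ∣ e) :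
    (∀ g : ℕ, ∃ k : ℤ, W e g - _root_.C g = 4 * k) ∧
    (∀ g : ℕ, 1 ≤ g → ¬ (4 ∣ g) →
      (∃ k : ℤ, W e g = 4 * k) ∧ (∃ k : ℤ, _root_.C g = 4 * k)) := by
  obtain ⟨f, hef⟩ := he
  have hpsi : ∀ g : ℕ, psi ((Fw e g : (PowerSeries ℤ)ˣ) : PowerSeries ℤ)
      = ((∏ s ∈ Icc 1 g, (uE s) ^ (-6 : ℤ) : (PowerSeries (ZMod 4))ˣ) :
        PowerSeries (ZMod 4)) := by
    intro g
    rw [show psi ((Fw e g : (PowerSeries ℤ)ˣ) : PowerSeries ℤ)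
        = ((psiU (Fw e g) : (PowerSeries (ZMod 4))ˣ) : PowerSeries (ZMod 4)) from rfl,
      psiU_Fw e f hef g, prod_uB_eq]
  have hpsic : ∀ g : ℕ, psi ((Fc g : (PowerSeries ℤ)ˣ) : PowerSeries ℤ)
      = ((∏ s ∈ Icc 1 g, (uE s) ^ (-6 : ℤ) : (PowerSeries (ZMod 4))ˣ) :
        PowerSeries (ZMod 4)) := by
    intro g
    rw [show psi ((Fc g : (PowerSeries ℤ)ˣ) : PowerSeries ℤ)
        = ((psiU (Fc g) : (PowerSeries (ZMod 4))ˣ) : PowerSeries (ZMod 4)) from rfl,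
      psiU_Fc g, prod_uB_eq]
  constructor
  · intro g
    set a := PowerSeries.coeff (R := ℤ) g ((Fw e g : (PowerSeries ℤ)ˣ) : PowerSeries ℤ) with ha
    set b := PowerSeries.coeff (R := ℤ) g ((Fc g : (PowerSeries ℤ)ˣ) : PowerSeries ℤ) with hb
    have hab : ((a : ℤ) : ZMod 4) = ((b : ℤ) : ZMod 4) := by
      rw [← coeff_psi, ← coeff_psi, hpsi g, hpsic g]
    have hdvd : (4 : ℤ) ∣ a - b := by
      have h2 := Int.ModEq.dvd ((ZMod.intCast_eq_intCast_iff a b 4).mp hab)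
      omega
    obtain ⟨k, hk⟩ := hdvd
    exact ⟨k, by rw [W_eq, C_eq]; push_cast [← ha, ← hb]; rw [show (a : ℚ) - b = ((a - b : ℤ) : ℚ)
      by push_cast; ring, hk]; push_cast; ring⟩
  · intro g hg hg4
    have hcoeff : PowerSeries.coeff (R := (ZMod 4)) g
        ((∏ s ∈ Icc 1 g, (uE s) ^ (-6 : ℤ) : (PowerSeries (ZMod 4))ˣ) :
          PowerSeries (ZMod 4)) = 0 := supp4_prod_uE g g hg4
    constructor
    · set a := PowerSeries.coeff (R := ℤ) g ((Fw e g : (PowerSeries ℤ)ˣ) : PowerSeries ℤ) with ha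
      have h0 : ((a : ℤ) : ZMod 4) = 0 := by rw [← coeff_psi, hpsi g]; exact hcoeff
      have hdvd : (4 : ℤ) ∣ a := by
        have := (ZMod.intCast_zmod_eq_zero_iff_dvd a 4).mp h0
        exact_mod_cast this
      obtain ⟨k, hk⟩ := hdvd
      exact ⟨k, by rw [W_eq, ← ha, hk]; push_cast; ring⟩
    · set b := PowerSeries.coeff (R := ℤ) g ((Fc g : (PowerSeries ℤ)ˣ) : PowerSeries ℤ) with hb
      have h0 : ((b : ℤ) : ZMod 4) = 0 := by rw [← coeff_psi, hpsic g]; exact hcoeff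
      have hdvd : (4 : ℤ) ∣ b := by
        have := (ZMod.intCast_zmod_eq_zero_iff_dvd b 4).mp h0
        exact_mod_cast this
      obtain ⟨k, hk⟩ := hdvd
      exact ⟨k, by rw [C_eq, ← hb, hk]; push_cast; ring⟩
end

section
/- If $e \equiv 0 \pmod 3$ and $g \not\equiv 0 \pmod 3$, $g \ge 1$, then $w_g \equiv c_g \equiv 0 \pmod 3$. -/
open PowerSeries Finset

section Aux

instance fact3 : Fact (Nat.Prime 3) := ⟨by norm_num⟩

instance charP3 : CharP ((ZMod 3)⟦X⟧) 3 :=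
  ⟨fun n => by
    rw [← map_natCast (PowerSeries.C (R := ZMod 3)) n,
      show (0 : (ZMod 3)⟦X⟧) = PowerSeries.C (R := ZMod 3) 0 by simp,
      PowerSeries.C_injective.eq_iff]
    exact CharP.cast_eq_zero_iff (ZMod 3) 3 n⟩

/-- A power series over `ZMod 3` supported on exponents divisible by 3. -/
def Supp3 (F : PowerSeries (ZMod 3)) : Prop :=
  ∀ n : ℕ, ¬ (3 ∣ n) → PowerSeries.coeff n F = 0

lemma Supp3.one : Supp3 1 := by
  intro n hn
  rw [PowerSeries.coeff_one, if_neg (by omega)]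

lemma Supp3.mul {F G : PowerSeries (ZMod 3)} (hF : Supp3 F) (hG : Supp3 G) :
    Supp3 (F * G) := by
  intro n hn
  rw [PowerSeries.coeff_mul]
  apply Finset.sum_eq_zero
  rintro ⟨p, q⟩ hpq
  rw [Finset.HasAntidiagonal.mem_antidiagonal] at hpq
  by_cases hp : 3 ∣ p
  · have hq : ¬ 3 ∣ q := fun h => hn (hpq ▸ Nat.dvd_add hp h)
    simp [hG q hq]
  · simp [hF p hp]

lemma Supp3.pow {F : PowerSeries (ZMod 3)} (hF : Supp3 F) : ∀ k : ℕ, Supp3 (F ^ k)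
  | 0 => by simpa using Supp3.one
  | k + 1 => by rw [pow_succ]; exact (hF.pow k).mul hF

lemma Supp3.inv {F : PowerSeries (ZMod 3)} (hF : Supp3 F) : Supp3 F⁻¹ := by
  intro n
  induction n using Nat.strong_induction_on with
  | _ n ih =>
    intro hn
    have hn0 : n ≠ 0 := by omega
    rw [PowerSeries.coeff_inv, if_neg hn0]
    have hsum : (∑ x ∈ antidiagonal n,
        if x.2 < n then PowerSeries.coeff x.1 F *
          PowerSeries.coeff x.2 F⁻¹ else 0) = 0 := by
      apply Finset.sum_eq_zero
      rintro ⟨p, q⟩ hpq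
      rw [Finset.HasAntidiagonal.mem_antidiagonal] at hpq
      by_cases hq : q < n
      · rw [if_pos hq]
        by_cases hp : 3 ∣ p
        · have hq3 : ¬ 3 ∣ q := fun h => hn (hpq ▸ Nat.dvd_add hp h)
          rw [ih q hq hq3, mul_zero]
        · rw [hF p hp, zero_mul]
      · rw [if_neg hq]
    rw [hsum, mul_zero]

lemma supp3_base (a : ZMod 3) (m : ℕ) (hm : 3 ∣ m) :
    Supp3 (1 + PowerSeries.C a * X ^ m) := by
  intro n hn
  have h1 : n ≠ 0 := by omega
  have h2 : n ≠ m := fun h => hn (h ▸ hm)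
  rw [map_add, PowerSeries.coeff_one, if_neg h1, PowerSeries.coeff_C_mul,
    PowerSeries.coeff_X_pow, if_neg h2, mul_zero, zero_add]

lemma cube3 (a : ZMod 3) (m : ℕ) :
    (1 + PowerSeries.C a * X ^ m) ^ 3
      = 1 + PowerSeries.C (a ^ 3) * X ^ (3 * m) := by
  rw [add_pow_char, one_pow, mul_pow, ← map_pow, ← pow_mul, mul_comm m 3]

lemma ccXpow' {R : Type*} [CommRing R] {r : ℕ} (hr : r ≠ 0) :
    constantCoeff ((X : R⟦X⟧) ^ r) = 0 := by
  rw [← coeff_zero_eq_constantCoeff_apply, PowerSeries.coeff_X_pow,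
    if_neg (Ne.symm hr)]

lemma inv_pow3 (f : (ZMod 3)⟦X⟧) (hf : constantCoeff f = 1) :
    (f⁻¹) ^ 3 = (f ^ 3)⁻¹ := by
  have hc : constantCoeff (f ^ 3) ≠ 0 := by
    rw [map_pow, hf, one_pow]; exact one_ne_zero
  rw [eq_inv_iff_mul_eq_one hc, ← mul_pow, mul_comm f⁻¹ f,
    PowerSeries.mul_inv_cancel f (by rw [hf]; exact one_ne_zero), one_pow]

/-- Supp3 for `±`-powers of `1 + a·Xᵐ` with exponent divisible by 3. -/
lemma supp3_zp (a : ZMod 3) (m : ℕ) (hm : m ≠ 0) (n : ℤ) (hn : 3 ∣ n) :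
    Supp3 (if 0 ≤ n then (1 + PowerSeries.C a * X ^ m) ^ n.toNat
      else ((1 + PowerSeries.C a * X ^ m)⁻¹) ^ (-n).toNat) := by
  set f := 1 + PowerSeries.C a * X ^ m with hfdef
  have hcc : constantCoeff f = 1 := by
    rw [hfdef, map_add, constantCoeff_one, map_mul, ccXpow' hm, mul_zero, add_zero]
  have hcube : Supp3 (f ^ 3) := by
    rw [hfdef, cube3]
    exact supp3_base _ _ ⟨m, rfl⟩
  split
  · obtain ⟨k, hk⟩ : 3 ∣ n.toNat := by omega
    rw [hk, pow_mul]
    exact hcube.pow k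
  · obtain ⟨k, hk⟩ : 3 ∣ (-n).toNat := by omega
    rw [hk, pow_mul, inv_pow3 f hcc]
    exact hcube.inv.pow k

/-- Integer power over ℤ, with `invOfUnit` for negative exponents. -/
noncomputable def zpZ (f : PowerSeries ℤ) (n : ℤ) : PowerSeries ℤ :=
  if 0 ≤ n then f ^ n.toNat else (f.invOfUnit 1) ^ (-n).toNat

lemma map_invOfUnit {K : Type*} [Field K] (σ : ℤ →+* K) (f : PowerSeries ℤ)
    (hf : constantCoeff f = 1) :
    PowerSeries.map σ (f.invOfUnit 1) = (PowerSeries.map σ f)⁻¹ := by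
  have hc : constantCoeff (PowerSeries.map σ f) ≠ 0 := by
    rw [← coeff_zero_eq_constantCoeff_apply, PowerSeries.coeff_map,
      coeff_zero_eq_constantCoeff_apply, hf, map_one]
    exact one_ne_zero
  rw [eq_inv_iff_mul_eq_one hc, ← map_mul,
    PowerSeries.invOfUnit_mul f 1 (by rw [hf]; rfl), map_one]

lemma map_zpZ {K : Type*} [Field K] (σ : ℤ →+* K) (f : PowerSeries ℤ)
    (hf : constantCoeff f = 1) (n : ℤ) :
    PowerSeries.map σ (zpZ f n) =
      if 0 ≤ n then (PowerSeries.map σ f) ^ n.toNat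
      else ((PowerSeries.map σ f)⁻¹) ^ (-n).toNat := by
  unfold zpZ
  split
  · rw [map_pow]
  · rw [map_pow, map_invOfUnit σ f hf]

lemma cc_one_add {m : ℕ} (hm : m ≠ 0) :
    constantCoeff (1 + X ^ m : ℤ⟦X⟧) = 1 := by
  rw [map_add, constantCoeff_one, ccXpow' hm, add_zero]

lemma cc_one_sub {m : ℕ} (hm : m ≠ 0) :
    constantCoeff (1 - X ^ m : ℤ⟦X⟧) = 1 := by
  rw [map_sub, constantCoeff_one, ccXpow' hm, sub_zero]

noncomputable def WZ (e : ℤ) (g : ℕ) : PowerSeries ℤ :=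
  (∏ r ∈ Icc 1 g, zpZ (1 + X ^ r) (-e)) *
  (∏ s ∈ Icc 1 g, zpZ (1 - X ^ (2 * s)) (-((24 - e) / 2)))

noncomputable def CZ (g : ℕ) : PowerSeries ℤ :=
  ∏ s ∈ Icc 1 g, ((1 - X ^ s : PowerSeries ℤ).invOfUnit 1) ^ 24

lemma map_W (e : ℤ) (g : ℕ) :
    PowerSeries.map (Int.castRingHom ℚ) (WZ e g) =
      (∏ r ∈ Icc 1 g, zp (1 + PowerSeries.X ^ r) (-e)) *
      (∏ s ∈ Icc 1 g, zp (1 - PowerSeries.X ^ (2 * s)) (-((24 - e) / 2))) := by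
  rw [WZ, map_mul, map_prod, map_prod]
  congr 1
  · apply Finset.prod_congr rfl
    intro r hr
    have hr1 : r ≠ 0 := by rw [Finset.mem_Icc] at hr; omega
    rw [map_zpZ _ _ (cc_one_add hr1)]
    have : PowerSeries.map (Int.castRingHom ℚ) (1 + X ^ r)
        = 1 + (PowerSeries.X : PowerSeries ℚ) ^ r := by
      rw [map_add, map_one, map_pow, PowerSeries.map_X]
    rw [this, zp]
  · apply Finset.prod_congr rfl
    intro s hs
    have hs1 : 2 * s ≠ 0 := by rw [Finset.mem_Icc] at hs; omega
    rw [map_zpZ _ _ (cc_one_sub hs1)]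
    have : PowerSeries.map (Int.castRingHom ℚ) (1 - X ^ (2 * s))
        = 1 - (PowerSeries.X : PowerSeries ℚ) ^ (2 * s) := by
      rw [map_sub, map_one, map_pow, PowerSeries.map_X]
    rw [this, zp]

lemma map_Cz (g : ℕ) :
    PowerSeries.map (Int.castRingHom ℚ) (CZ g) =
      ∏ s ∈ Icc 1 g, ((1 - PowerSeries.X ^ s : PowerSeries ℚ)⁻¹) ^ 24 := by
  rw [CZ, map_prod]
  apply Finset.prod_congr rfl
  intro s hs
  have hs1 : s ≠ 0 := by rw [Finset.mem_Icc] at hs; omega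
  rw [map_pow, map_invOfUnit _ _ (cc_one_sub hs1), map_sub, map_one, map_pow,
    PowerSeries.map_X]

lemma one_add_eq (m : ℕ) :
    (1 + X ^ m : (ZMod 3)⟦X⟧) = 1 + PowerSeries.C 1 * X ^ m := by
  rw [map_one, one_mul]

lemma one_sub_eq (m : ℕ) :
    (1 - X ^ m : (ZMod 3)⟦X⟧) = 1 + PowerSeries.C (-1) * X ^ m := by
  rw [map_neg, map_one, neg_one_mul, sub_eq_add_neg]

lemma supp3_WZ (e : ℤ) (h3e : 3 ∣ e) (h3f : (3 : ℤ) ∣ ((24 - e) / 2)) (g : ℕ) :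
    Supp3 (PowerSeries.map (Int.castRingHom (ZMod 3)) (WZ e g)) := by
  rw [WZ, map_mul, map_prod, map_prod]
  apply Supp3.mul
  · apply Finset.prod_induction _ Supp3 (fun _ _ => Supp3.mul) Supp3.one
    intro r hr
    have hr1 : r ≠ 0 := by rw [Finset.mem_Icc] at hr; omega
    rw [map_zpZ _ _ (cc_one_add hr1)]
    have hmap : PowerSeries.map (Int.castRingHom (ZMod 3)) (1 + X ^ r)
        = 1 + PowerSeries.C 1 * X ^ r := by
      rw [map_add, map_one, map_pow, PowerSeries.map_X, ← one_add_eq]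
    rw [hmap]
    exact supp3_zp 1 r hr1 (-e) (by omega)
  · apply Finset.prod_induction _ Supp3 (fun _ _ => Supp3.mul) Supp3.one
    intro s hs
    have hs1 : 2 * s ≠ 0 := by rw [Finset.mem_Icc] at hs; omega
    rw [map_zpZ _ _ (cc_one_sub hs1)]
    have hmap : PowerSeries.map (Int.castRingHom (ZMod 3)) (1 - X ^ (2 * s))
        = 1 + PowerSeries.C (-1) * X ^ (2 * s) := by
      rw [map_sub, map_one, map_pow, PowerSeries.map_X, ← one_sub_eq]
    rw [hmap]
    exact supp3_zp (-1) (2 * s) hs1 _ (by omega)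

lemma supp3_CZ (g : ℕ) :
    Supp3 (PowerSeries.map (Int.castRingHom (ZMod 3)) (CZ g)) := by
  rw [CZ, map_prod]
  apply Finset.prod_induction _ Supp3 (fun _ _ => Supp3.mul) Supp3.one
  intro s hs
  have hs1 : s ≠ 0 := by rw [Finset.mem_Icc] at hs; omega
  rw [map_pow, map_invOfUnit _ _ (cc_one_sub hs1)]
  have hmap : PowerSeries.map (Int.castRingHom (ZMod 3)) (1 - X ^ s)
      = 1 + PowerSeries.C (-1) * X ^ s := by
    rw [map_sub, map_one, map_pow, PowerSeries.map_X, ← one_sub_eq]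
  rw [hmap]
  have := supp3_zp (-1) s hs1 (-24) (by omega)
  rw [if_neg (by omega)] at this
  simpa using this

lemma int_coeff_div3 (F : PowerSeries ℤ) (g : ℕ)
    (h : Supp3 (PowerSeries.map (Int.castRingHom (ZMod 3)) F)) (hg3 : ¬ (3 ∣ g)) :
    ∃ k : ℤ, PowerSeries.coeff g F = 3 * k := by
  have h0 : ((PowerSeries.coeff g F : ℤ) : ZMod 3) = 0 := by
    have := h g hg3
    rwa [PowerSeries.coeff_map] at this
  have := (ZMod.intCast_zmod_eq_zero_iff_dvd _ 3).1 h0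
  obtain ⟨k, hk⟩ := this
  exact ⟨k, by push_cast at hk ⊢; linarith⟩

end Aux

theorem stmt11 (e : ℤ) (he : Even e) (h3 : (3 : ℤ) ∣ e)
    (g : ℕ) (hg : 1 ≤ g) (hg3 : ¬ (3 ∣ g)) :
    (∃ k : ℤ, W e g = 3 * k) ∧ (∃ k : ℤ, _root_.C g = 3 * k) := by
  have h6 : (6 : ℤ) ∣ e := by obtain ⟨a, ha⟩ := he; omega
  have h3f : (3 : ℤ) ∣ ((24 - e) / 2) := by omega
  constructor
  · obtain ⟨k, hk⟩ := int_coeff_div3 (WZ e g) g (supp3_WZ e h3 h3f g) hg3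
    refine ⟨k, ?_⟩
    have hWeq : W e g = ((PowerSeries.coeff g (WZ e g) : ℤ) : ℚ) := by
      rw [W, ← map_W, PowerSeries.coeff_map]
      rfl
    rw [hWeq, hk]
    push_cast
    ring
  · obtain ⟨k, hk⟩ := int_coeff_div3 (CZ g) g (supp3_CZ g) hg3
    refine ⟨k, ?_⟩
    have hCeq : _root_.C g = ((PowerSeries.coeff g (CZ g) : ℤ) : ℚ) := by
      rw [_root_.C, ← map_Cz, PowerSeries.coeff_map]
      rfl
    rw [hCeq, hk]
    push_cast
    ring
end
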